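/- There exists q₀ ∈ (1, 2) such that for all q ∈ (1, q₀), (1 - (1/3)^{q-1})^{2/q} - 2·(1 - 2·(1/2)^q)^{2/q} > 0. -/

import Mathlib

open Real

lemma log_three_gt : (1.09:ℝ) < Real.log 3 := by
  rw [show (1.09:ℝ) = 1 + 0.09 by norm_num, Real.lt_log_iff_exp_lt (by norm_num : (0:ℝ) < 3),
    Real.exp_add]
  have h1 : Real.exp 1 < 2.7182818286 := Real.exp_one_lt_d9
  have h2 : Real.exp (0.09:ℝ) ≤ 1 / 0.91 := by
    have := Real.add_one_le_exp (-0.09:ℝ)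
    have hpos : (0:ℝ) < Real.exp (0.09:ℝ) := Real.exp_pos _
    have hinv : Real.exp (-0.09:ℝ) = (Real.exp (0.09:ℝ))⁻¹ := by
      rw [Real.exp_neg]
    rw [hinv] at this
    rw [div_eq_mul_inv, one_mul]
    have h91 : (0.91:ℝ) ≤ (Real.exp (0.09:ℝ))⁻¹ := by linarith
    calc Real.exp (0.09:ℝ) = ((Real.exp (0.09:ℝ))⁻¹)⁻¹ := by rw [inv_inv]
      _ ≤ (0.91:ℝ)⁻¹ := by
          apply inv_anti₀ (by norm_num) h91
  have hp : (0:ℝ) < Real.exp (0.09:ℝ) := Real.exp_pos _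
  nlinarith [Real.exp_pos (1:ℝ)]

lemma log_three_lt : Real.log 3 < 1.39 := by
  have h4 : Real.log 3 < Real.log 4 := Real.log_lt_log (by norm_num) (by norm_num)
  have : Real.log 4 = 2 * Real.log 2 := by
    rw [show (4:ℝ) = 2 ^ (2:ℕ) by norm_num, Real.log_pow]; push_cast; ring
  have h2 := Real.log_two_lt_d9
  linarith

lemma key_pow : (2:ℝ) < (3/2:ℝ) ^ ((200:ℝ)/101) := by
  by_contra h
  push_neg at h
  have h0 : (0:ℝ) ≤ (3/2:ℝ) ^ ((200:ℝ)/101) := (Real.rpow_pos_of_pos (by norm_num) _).le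
  have hp : ((3/2:ℝ) ^ ((200:ℝ)/101)) ^ (101:ℕ) ≤ 2 ^ (101:ℕ) :=
    pow_le_pow_left₀ h0 h 101
  have heq : ((3/2:ℝ) ^ ((200:ℝ)/101)) ^ (101:ℕ) = (3/2:ℝ) ^ (200:ℕ) := by
    rw [← Real.rpow_natCast (((3/2:ℝ)) ^ ((200:ℝ)/101)) 101, ← Real.rpow_mul (by norm_num)]
    norm_num
  rw [heq] at hp
  norm_num at hp

theorem antisym_state_monogamy_near_one :
    ∃ q₀ : ℝ, 1 < q₀ ∧ q₀ < 2 ∧ ∀ q : ℝ, 1 < q → q < q₀ →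
      0 < (1 - ((1:ℝ) / 3) ^ (q - 1)) ^ (2 / q)
          - 2 * (1 - 2 * ((1:ℝ) / 2) ^ q) ^ (2 / q) := by
  refine ⟨101/100, by norm_num, by norm_num, ?_⟩
  intro q hq1 hq2
  set t := q - 1 with ht_def
  have ht : 0 < t := by simp [ht_def]; linarith
  have ht' : t < 1/100 := by simp [ht_def]; linarith
  set l2 := Real.log 2 with hl2_def
  set l3 := Real.log 3 with hl3_def
  have hl2_lt : l2 < 0.6932 := by have := Real.log_two_lt_d9; rw [hl2_def]; linarith
  have hl2_gt : 0.693 < l2 := by have := Real.log_two_gt_d9; rw [hl2_def]; linarith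
  have hl3_gt : (1.09:ℝ) < l3 := log_three_gt
  have hl3_lt : l3 < 1.39 := log_three_lt
  -- rewrite bases via exp
  have h13 : ((1:ℝ)/3) ^ t = Real.exp (-(l3 * t)) := by
    rw [Real.rpow_def_of_pos (by norm_num : (0:ℝ) < 1/3)]
    rw [show ((1:ℝ)/3) = 3⁻¹ by norm_num, Real.log_inv, hl3_def]
    ring_nf
  have h12 : ((1:ℝ)/2) ^ t = Real.exp (-(l2 * t)) := by
    rw [Real.rpow_def_of_pos (by norm_num : (0:ℝ) < 1/2)]
    rw [show ((1:ℝ)/2) = 2⁻¹ by norm_num, Real.log_inv, hl2_def]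
    ring_nf
  have hhalfq : 2 * ((1:ℝ)/2) ^ q = ((1:ℝ)/2) ^ t := by
    have : ((1:ℝ)/2) ^ q = ((1:ℝ)/2) ^ t * ((1:ℝ)/2) ^ (1:ℝ) := by
      rw [← Real.rpow_add (by norm_num : (0:ℝ) < 1/2)]
      congr 1; rw [ht_def]; ring
    rw [this, Real.rpow_one]; ring
  set a := 1 - Real.exp (-(l3 * t)) with ha_def
  set b := 1 - Real.exp (-(l2 * t)) with hb_def
  have hgoal_eq : (1 - ((1:ℝ) / 3) ^ (q - 1)) ^ (2 / q)
          - 2 * (1 - 2 * ((1:ℝ) / 2) ^ q) ^ (2 / q)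
        = a ^ (2/q) - 2 * b ^ (2/q) := by
    rw [← ht_def, h13, hhalfq, h12]
  rw [hgoal_eq]
  -- basic positivity
  have hb_pos : 0 < b := by
    have : Real.exp (-(l2 * t)) < 1 := by
      apply Real.exp_lt_one_iff.mpr
      nlinarith
    rw [hb_def]; linarith
  have hbu : b ≤ l2 * t := by
    have := Real.add_one_le_exp (-(l2 * t))
    rw [hb_def]; linarith
  have hal : l3 * t / (1 + l3 * t) ≤ a := by
    have hx : 0 < l3 * t := by positivity
    have h1 : 1 + l3 * t ≤ Real.exp (l3 * t) := by
      have := Real.add_one_le_exp (l3 * t); linarith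
    have h2 : Real.exp (-(l3 * t)) ≤ (1 + l3 * t)⁻¹ := by
      rw [Real.exp_neg]
      apply inv_anti₀ (by linarith) h1
    have h3 : (1 + l3 * t)⁻¹ = 1 - l3 * t / (1 + l3 * t) := by
      field_simp
      ring
    rw [ha_def]; rw [h3] at h2; linarith
  clear_value t l2 l3 a b
  clear hgoal_eq h13 h12 hhalfq ht_def hl2_def hl3_def ha_def hb_def
  have hab : 3/2 * b ≤ a := by
    have hkey : 3/2 * (l2 * t) ≤ l3 * t / (1 + l3 * t) := by
      have hx_lt : l3 * t < 0.0139 := by nlinarith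
      have hfac : 3/2 * l2 * (1 + l3 * t) < 1.06 := by nlinarith
      rw [le_div_iff₀ (by nlinarith)]
      nlinarith [mul_lt_mul_of_pos_right hfac ht]
    linarith
  have hr : (3/2:ℝ) ≤ a / b := by
    rw [le_div_iff₀ hb_pos]; linarith
  have hr1 : (1:ℝ) < a / b := by linarith
  have he : (200:ℝ)/101 < 2/q := by
    rw [div_lt_div_iff₀ (by norm_num) (by linarith)]
    linarith
  have h2lt : (2:ℝ) < (a/b) ^ (2/q) := by
    calc (2:ℝ) < (3/2:ℝ) ^ ((200:ℝ)/101) := key_pow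
      _ ≤ (a/b) ^ ((200:ℝ)/101) := Real.rpow_le_rpow (by norm_num) hr (by norm_num)
      _ ≤ (a/b) ^ (2/q) := by
          apply Real.rpow_le_rpow_left_iff hr1 |>.mpr he.le
  have hsplit : a ^ (2/q) = (a/b) ^ (2/q) * b ^ (2/q) := by
    rw [← Real.mul_rpow (by positivity) hb_pos.le]
    congr 1
    field_simp
  have hbq : 0 < b ^ (2/q) := Real.rpow_pos_of_pos hb_pos _
  rw [hsplit]
  nlinarith
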